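/- Core entropy–loss inequality: let A > 0, B ≥ A/4 + 1/A, A' = A + 1, B' = B + 1. Then for all a, b, c, y ∈ [0,1] and z ∈ (0,1) with z·b ≤ (1−z)·a, one has B'·(y ln(y/z) + (1−y) ln((1−y)/(1−z))) + A'(1−y)a − y·b + A·c ≥ 0, with the convention 0·ln 0 = 0. -/

import Mathlib

open Finset Filter

/-- A probability distribution on finite binary strings:
nonnegative, `1` on the empty string, and additive under one-symbol extension. -/
def IsDistr (ρ : List Bool → ℝ) : Prop :=
  (∀ x, 0 ≤ ρ x) ∧ ρ [] = 1 ∧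
    ∀ x, ρ x = ρ (x ++ [false]) + ρ (x ++ [true])

/-- Conditional probability `ρ(b | x) = ρ(xb)/ρ(x)` (junk `0` when `ρ x = 0`). -/
noncomputable def condP (ρ : List Bool → ℝ) (x : List Bool) (b : Bool) : ℝ :=
  ρ (x ++ [b]) / ρ x

/-- Instantaneous relative entropy
`h_t(x) = ∑_b μ(b|x) ln (μ(b|x)/ξ(b|x))` (conventions `0·ln 0 = 0` are automatic
since `Real.log 0 = 0` and `r/0 = 0`). -/
noncomputable def instEnt (μ ξ : List Bool → ℝ) (x : List Bool) : ℝ :=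
  ∑ b : Bool, condP μ x b * Real.log (condP μ x b / condP ξ x b)

/-- Total relative entropy `H_n = ∑_{t=1}^n ∑_{x_{<t}} μ(x_{<t}) h_t(x_{<t})`
(histories of length `t-1`, i.e. length `t ∈ {0,…,n-1}`). -/
noncomputable def totalEnt (μ ξ : List Bool → ℝ) (n : ℕ) : ℝ :=
  ∑ t ∈ Finset.range n, ∑ x : Fin t → Bool,
    μ (List.ofFn x) * instEnt μ ξ (List.ofFn x)

/-- `ρ`-expected loss of predicting `y` after history `x`. -/
noncomputable def expLoss (ρ : List Bool → ℝ) (l : Bool → Bool → ℝ)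
    (x : List Bool) (y : Bool) : ℝ :=
  ∑ b : Bool, condP ρ x b * l b y

/-- `Y` is a fixed choice of minimizers for the scheme `Λ_ρ`. -/
def IsPredictor (ρ : List Bool → ℝ) (l : Bool → Bool → ℝ)
    (Y : List Bool → Bool) : Prop :=
  ∀ x y, expLoss ρ l x (Y x) ≤ expLoss ρ l x y

/-- Total `μ`-expected loss `L_{nΛ}` of the scheme with minimizers `Y`. -/
noncomputable def totalLoss (μ : List Bool → ℝ) (l : Bool → Bool → ℝ)
    (Y : List Bool → Bool) (n : ℕ) : ℝ :=
  ∑ t ∈ Finset.range n, ∑ x : Fin t → Bool,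
    μ (List.ofFn x) * expLoss μ l (List.ofFn x) (Y (List.ofFn x))

lemma key_poly' (A β : ℝ) (hA : 0 < A) (hβ : 0 < β) (hc : β*(A+2)^2 ≤ 4*A) :
    (1+β/2+β^2/6+5/96*β^3) * (24+24*((A+1)*β)+12*((A+1)*β)^2+4*((A+1)*β)^3+((A+1)*β)^4)
      ≤ (A+1)*(24+12*((A+1)*β)+4*((A+1)*β)^2+((A+1)*β)^3) := by
  have hA' := hA.le
  have hβ' := hβ.le
  have hp : (0:ℝ) ≤ 4*A - β*(A+2)^2 := by linarith
  have h1 : (0:ℝ) ≤ 168*β^3 + 35*β^7 + 192*A*β^2 + 936*A*β^3 + 500*A*β^4 + 144*A*β^5 + 32*A*β^6 + 20*A*β^7 + 214*A^2*β^4 + 47*A^2*β^5 + 77*A^2*β^6 + 816*A^3*β^2 + 192*A^3*β^3 + 96*A^4*β^3 := by positivity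
  have h2 : (0:ℝ) ≤ (4*A - β*(A+2)^2) * (576 + 576*β + 384*β^2 + 150*β^3 + 43*β^4 + 9*β^5 + 10*β^6 + 432*A*β + 576*A*β^2 + 384*A*β^3 + 128*A*β^4 + 40*A*β^5 + 96*A^2*β^3 + 48*A^2*β^4 + 16*A^2*β^5 + 5*A^2*β^6) := by positivity
  nlinarith [h1, h2]

lemma exp_quartic' {x : ℝ} (h0 : 0 ≤ x) (h1 : x ≤ 1) :
    Real.exp x ≤ 1 + x + x^2/2 + x^3/6 + 5/96*x^4 := by
  have h := Real.exp_bound' h0 h1 (n := 4) (by norm_num)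
  rw [Finset.sum_range_succ, Finset.sum_range_succ, Finset.sum_range_succ,
    Finset.sum_range_succ, Finset.sum_range_zero] at h
  norm_num [Nat.factorial] at h
  linarith

lemma exp_neg_quartic' {t : ℝ} (ht : 0 ≤ t) :
    (24 + 24*t + 12*t^2 + 4*t^3 + t^4) * Real.exp (-t) ≤ 24 := by
  have h := Real.sum_le_exp_of_nonneg ht 5
  rw [Finset.sum_range_succ, Finset.sum_range_succ, Finset.sum_range_succ,
    Finset.sum_range_succ, Finset.sum_range_succ, Finset.sum_range_zero] at h
  norm_num [Nat.factorial] at h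
  have he : Real.exp (-t) * Real.exp t = 1 := by rw [← Real.exp_add]; simp
  have hp := (Real.exp_pos (-t)).le
  nlinarith [mul_le_mul_of_nonneg_left h hp]

lemma gibbs' {y w : ℝ} (hy0 : 0 ≤ y) (hy1 : y ≤ 1) (hw0 : 0 < w) (hw1 : w < 1) :
    0 ≤ y * Real.log (y/w) + (1-y) * Real.log ((1-y)/(1-w)) := by
  rcases eq_or_lt_of_le hy0 with h0 | h0
  · subst h0
    have : (1:ℝ) ≤ (1-0)/(1-w) := by
      rw [le_div_iff₀ (by linarith)]; linarith
    have hl := Real.log_nonneg this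
    nlinarith [hl]
  rcases eq_or_lt_of_le hy1 with h1 | h1
  · subst h1
    have : (1:ℝ) ≤ 1/w := by rw [le_div_iff₀ hw0]; linarith
    have hl := Real.log_nonneg this
    nlinarith [hl]
  · have l1 : Real.log (w/y) ≤ w/y - 1 := Real.log_le_sub_one_of_pos (by positivity)
    have l2 : Real.log ((1-w)/(1-y)) ≤ (1-w)/(1-y) - 1 :=
      Real.log_le_sub_one_of_pos (by apply div_pos <;> linarith)
    have e1 : Real.log (y/w) = - Real.log (w/y) := by
      rw [← Real.log_inv, inv_div]
    have e2 : Real.log ((1-y)/(1-w)) = - Real.log ((1-w)/(1-y)) := by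
      rw [← Real.log_inv, inv_div]
    rw [e1, e2]
    have k1 : y * (w/y - 1) = w - y := by
      field_simp
    have k2 : (1-y) * ((1-w)/(1-y) - 1) = y - w := by
      have hne : ((1:ℝ)-y) ≠ 0 := (show (0:ℝ) < 1-y by linarith).ne'
      field_simp
      ring
    nlinarith [mul_le_mul_of_nonneg_left l1 hy0, mul_le_mul_of_nonneg_left l2 (by linarith : (0:ℝ) ≤ 1-y)]

lemma varKL' {y z : ℝ} (t u : ℝ) (hy0 : 0 ≤ y) (hy1 : y ≤ 1) (hz0 : 0 < z) (hz1 : z < 1) :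
    y*t + (1-y)*u - Real.log (z*Real.exp t + (1-z)*Real.exp u)
      ≤ y*Real.log (y/z) + (1-y)*Real.log ((1-y)/(1-z)) := by
  set S := z*Real.exp t + (1-z)*Real.exp u with hSdef
  have hS0 : 0 < S :=
    add_pos (mul_pos hz0 (Real.exp_pos t)) (mul_pos (by linarith) (Real.exp_pos u))
  set w := z*Real.exp t / S with hwdef
  have hw0 : 0 < w := div_pos (mul_pos hz0 (Real.exp_pos t)) hS0
  have hw1 : w < 1 := by
    rw [hwdef, div_lt_one hS0, hSdef]
    nlinarith [Real.exp_pos u]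
  have h1w : 1 - w = (1-z)*Real.exp u / S := by
    rw [hwdef]; field_simp; rw [hSdef]; ring
  have hg := gibbs' hy0 hy1 hw0 hw1
  have e1 : y * Real.log (y/w) = y * Real.log (y/z) - y*t + y*Real.log S := by
    rcases eq_or_lt_of_le hy0 with h | h
    · rw [← h]; ring
    · have hlw : Real.log w = Real.log z + t - Real.log S := by
        rw [hwdef, Real.log_div (by positivity) hS0.ne',
          Real.log_mul hz0.ne' (Real.exp_ne_zero t), Real.log_exp]
      rw [Real.log_div h.ne' hw0.ne', Real.log_div h.ne' hz0.ne', hlw]; ring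
  have e2 : (1-y) * Real.log ((1-y)/(1-w)) =
      (1-y) * Real.log ((1-y)/(1-z)) - (1-y)*u + (1-y)*Real.log S := by
    rcases eq_or_lt_of_le hy1 with h | h
    · subst h; ring_nf
    · have hl1w : Real.log (1-w) = Real.log (1-z) + u - Real.log S := by
        rw [h1w, Real.log_div (mul_pos (by linarith : (0:ℝ) < 1-z) (Real.exp_pos u)).ne' hS0.ne',
          Real.log_mul (by linarith : (0:ℝ) < 1-z).ne' (Real.exp_ne_zero u), Real.log_exp]
      rw [Real.log_div (by linarith : (0:ℝ) < 1-y).ne' (by linarith : (0:ℝ) < 1-w).ne',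
        Real.log_div (by linarith : (0:ℝ) < 1-y).ne' (by linarith : (0:ℝ) < 1-z).ne', hl1w]; ring
  nlinarith [hg, e1, e2]

lemma exp_neg_convex' {a s : ℝ} (ha0 : 0 ≤ a) (ha1 : a ≤ 1) :
    Real.exp (-(a*s)) ≤ a * Real.exp (-s) + (1-a) := by
  have h := convexOn_exp.2 (Set.mem_univ (-s)) (Set.mem_univ (0:ℝ)) ha0
    (by linarith : (0:ℝ) ≤ 1-a) (by ring)
  simp only [smul_eq_mul, mul_zero, add_zero, Real.exp_zero, mul_one, mul_neg] at h
  exact h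

set_option maxHeartbeats 1000000 in
lemma S_le_one' (A B' a b z : ℝ) (hA : 0 < A) (hB' : (A+2)^2/(4*A) ≤ B')
    (ha0 : 0 ≤ a) (ha1 : a ≤ 1) (hb0 : 0 ≤ b) (hb1 : b ≤ 1)
    (hz0 : 0 < z) (hz1 : z < 1) (hzb : z * b ≤ (1 - z) * a) :
    z * Real.exp (b/B') + (1-z) * Real.exp (-((A+1)*a/B')) ≤ 1 := by
  have h4A : (0:ℝ) < 4*A := by linarith
  have hB'0 : 0 < B' := lt_of_lt_of_le (by positivity) hB'
  have hβ0 : 0 < 1/B' := by positivity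
  set β : ℝ := 1/B' with hβdef
  clear_value β
  have hβc : β*(A+2)^2 ≤ 4*A := by
    rw [hβdef, div_mul_eq_mul_div, div_le_iff₀ hB'0, one_mul]
    calc (A+2)^2 = (A+2)^2/(4*A)*(4*A) := by field_simp
    _ ≤ B'*(4*A) := mul_le_mul_of_nonneg_right hB' h4A.le
    _ = 4*A*B' := by ring
  have hβhalf : β ≤ 1/2 := by nlinarith [sq_nonneg (A-2), hβc, hβ0]
  have heb : b/B' = b*β := by rw [hβdef]; ring
  have hea : -((A+1)*a/B') = -((A+1)*a*β) := by rw [hβdef]; ring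
  rw [heb, hea]
  -- positive side
  have hbβ1 : b*β ≤ 1 := by nlinarith
  have hq := exp_quartic' (by positivity : (0:ℝ) ≤ b*β) hbβ1
  have hmono : b*β + (b*β)^2/2 + (b*β)^3/6 + 5/96*(b*β)^4
      ≤ b*β*(1+β/2+β^2/6+5/96*β^3) := by
    have n1 : 0 ≤ b*(1-b)*β^2 :=
      mul_nonneg (mul_nonneg hb0 (by linarith)) (sq_nonneg β)
    have n2 : 0 ≤ b*(1-b^2)*β^3 :=
      mul_nonneg (mul_nonneg hb0 (by nlinarith)) (by positivity)
    have n3 : 0 ≤ b*(1-b^3)*β^4 :=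
      mul_nonneg (mul_nonneg hb0 (by nlinarith)) (by positivity)
    nlinarith [n1, n2, n3]
  have hpos : z * Real.exp (b*β) ≤ z + z*b*(β*(1+β/2+β^2/6+5/96*β^3)) := by
    have u1 := mul_le_mul_of_nonneg_left hq hz0.le
    have u2 := mul_le_mul_of_nonneg_left hmono hz0.le
    nlinarith [u1, u2]
  -- chain via constraint
  have hchain : z*b*(β*(1+β/2+β^2/6+5/96*β^3))
      ≤ (1-z)*a*(β*(1+β/2+β^2/6+5/96*β^3)) :=
    mul_le_mul_of_nonneg_right hzb (by positivity)
  -- negative side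
  have hs0 : (0:ℝ) ≤ (A+1)*β := by positivity
  have hQ0 : (0:ℝ) < 24 + 24*((A+1)*β) + 12*((A+1)*β)^2 + 4*((A+1)*β)^3 + ((A+1)*β)^4 := by
    positivity
  have hkey := key_poly' A β hA hβ0 hβc
  have h5 : β*(1+β/2+β^2/6+5/96*β^3)
        * (24 + 24*((A+1)*β) + 12*((A+1)*β)^2 + 4*((A+1)*β)^3 + ((A+1)*β)^4)
      ≤ (24 + 24*((A+1)*β) + 12*((A+1)*β)^2 + 4*((A+1)*β)^3 + ((A+1)*β)^4) - 24 := by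
    nlinarith [mul_le_mul_of_nonneg_left hkey hβ0.le]
  have hL2 := exp_neg_quartic' hs0
  have h6 : β*(1+β/2+β^2/6+5/96*β^3) ≤ 1 - Real.exp (-((A+1)*β)) := by
    have h7 : β*(1+β/2+β^2/6+5/96*β^3)
          * (24 + 24*((A+1)*β) + 12*((A+1)*β)^2 + 4*((A+1)*β)^3 + ((A+1)*β)^4)
        ≤ (1 - Real.exp (-((A+1)*β)))
          * (24 + 24*((A+1)*β) + 12*((A+1)*β)^2 + 4*((A+1)*β)^3 + ((A+1)*β)^4) := by
      nlinarith [hL2, h5]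
    exact le_of_mul_le_mul_right h7 hQ0
  have hconv : Real.exp (-((A+1)*a*β)) ≤ a * Real.exp (-((A+1)*β)) + (1-a) := by
    have h := exp_neg_convex' (s := (A+1)*β) ha0 ha1
    rw [show a*((A+1)*β) = (A+1)*a*β by ring] at h
    exact h
  have hneg : (1-z) * Real.exp (-((A+1)*a*β))
      ≤ (1-z) - (1-z)*a*(β*(1+β/2+β^2/6+5/96*β^3)) := by
    have h8 : a*(β*(1+β/2+β^2/6+5/96*β^3)) ≤ a*(1 - Real.exp (-((A+1)*β))) :=
      mul_le_mul_of_nonneg_left h6 ha0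
    nlinarith [hconv, h8, hz1]
  linarith [hpos, hchain, hneg]

/-- core entropy–loss inequality, eq. (13) of Section 3:
with `A' = A+1`, `B' = B+1`, for all `a,b,c,y ∈ [0,1]`, `z ∈ (0,1)` with
`z·b ≤ (1−z)·a`, one has
`B'(y ln(y/z) + (1−y) ln((1−y)/(1−z))) + A'(1−y)a − yb + Ac ≥ 0`
(the conventions `0·ln 0 = 0` hold automatically since `Real.log 0 = 0`). -/
theorem core_entropy_loss_inequality
    (A B : ℝ) (hA : 0 < A) (hB : A / 4 + 1 / A ≤ B)
    (a b c y z : ℝ)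
    (ha : a ∈ Set.Icc (0 : ℝ) 1) (hb : b ∈ Set.Icc (0 : ℝ) 1)
    (hc : c ∈ Set.Icc (0 : ℝ) 1) (hy : y ∈ Set.Icc (0 : ℝ) 1)
    (hz : z ∈ Set.Ioo (0 : ℝ) 1) (hzb : z * b ≤ (1 - z) * a) :
    0 ≤ (B + 1) * (y * Real.log (y / z) + (1 - y) * Real.log ((1 - y) / (1 - z)))
        + (A + 1) * (1 - y) * a - y * b + A * c := by

  obtain ⟨ha0, ha1⟩ := ha
  obtain ⟨hb0, hb1⟩ := hb
  obtain ⟨hc0, hc1⟩ := hc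
  obtain ⟨hy0, hy1⟩ := hy
  obtain ⟨hz0, hz1⟩ := hz
  have h4A : (0:ℝ) < 4*A := by linarith
  have hAA : A*(1/A) = 1 := mul_one_div_cancel hA.ne'
  have hBB : (A+2)^2/(4*A) ≤ B+1 := by
    rw [div_le_iff₀ h4A]
    nlinarith [mul_le_mul_of_nonneg_right hB h4A.le, hAA]
  have hB'0 : 0 < B+1 := lt_of_lt_of_le (by positivity) hBB
  have hS := S_le_one' A (B+1) a b z hA hBB ha0 ha1 hb0 hb1 hz0 hz1 hzb
  have hS0 : 0 < z*Real.exp (b/(B+1)) + (1-z)*Real.exp (-((A+1)*a/(B+1))) :=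
    add_pos (mul_pos hz0 (Real.exp_pos _)) (mul_pos (by linarith) (Real.exp_pos _))
  have hlog : Real.log (z*Real.exp (b/(B+1)) + (1-z)*Real.exp (-((A+1)*a/(B+1)))) ≤ 0 :=
    Real.log_nonpos hS0.le hS
  have hlog' : (B+1) * Real.log (z*Real.exp (b/(B+1)) + (1-z)*Real.exp (-((A+1)*a/(B+1)))) ≤ 0 :=
    mul_nonpos_iff.mpr (Or.inl ⟨hB'0.le, hlog⟩)
  have hvar := varKL' (y := y) (z := z) (b/(B+1)) (-((A+1)*a/(B+1))) hy0 hy1 hz0 hz1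
  have hmul := mul_le_mul_of_nonneg_left hvar hB'0.le
  have e : (B+1)*(y*(b/(B+1)) + (1-y)*(-((A+1)*a/(B+1)))
        - Real.log (z*Real.exp (b/(B+1)) + (1-z)*Real.exp (-((A+1)*a/(B+1)))))
      = y*b - (A+1)*(1-y)*a
        - (B+1)*Real.log (z*Real.exp (b/(B+1)) + (1-z)*Real.exp (-((A+1)*a/(B+1)))) := by
    field_simp
    ring
  rw [e] at hmul
  have hAc : 0 ≤ A*c := mul_nonneg hA.le hc0
  linarith [hmul, hlog', hAc]
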